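/- Let K be an algebraically closed field of characteristic p > 0 and let γ := {(x^p − x, x) : x ∈ K}, the inverse relation of the Artin–Schreier endomorphism, viewed as an additive subgroup of K × K (under addition). Then γ is an endogeny of the additive group of K with kat γ = {x ∈ K : x^p = x} (the prime field 𝔽_p), but γ does not commute sharply with itself: im(γ ∘ γ − γ ∘ γ) is not contained in kat γ + kat γ. -/

import Mathlib

open Pointwise

variable {A : Type*} [AddCommGroup A]

/-- The fibre `γ[a]` of a relation `γ ⊆ A × A` over `a`. -/
def fib (γ : Set (A × A)) (a : A) : Set A := {b | (a, b) ∈ γ}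

/-- The image `γ[S]` of a set `S ⊆ A` under a relation `γ ⊆ A × A`. -/
def eimg (γ : Set (A × A)) (S : Set A) : Set A := {b | ∃ a ∈ S, (a, b) ∈ γ}

/-- The katakernel `kat γ = γ[0]`. -/
def kat (γ : Set (A × A)) : Set A := {b | ((0 : A), b) ∈ γ}

/-- The image `im γ = γ[A]`. -/
def eim (γ : Set (A × A)) : Set A := {b | ∃ a, (a, b) ∈ γ}

/-- `γ` is (the carrier of) an additive subgroup of `A × A`. -/
def IsAddSubgroupSet (γ : Set (A × A)) : Prop :=
  (0 : A × A) ∈ γ ∧ (∀ p ∈ γ, ∀ q ∈ γ, p + q ∈ γ) ∧ (∀ p ∈ γ, -p ∈ γ)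

/-- An endogeny of `A`: an additive subgroup of `A × A` projecting onto `A`
with finite katakernel. -/
def IsEndogeny (γ : Set (A × A)) : Prop :=
  IsAddSubgroupSet γ ∧ (∀ a : A, ∃ b : A, (a, b) ∈ γ) ∧ (kat γ).Finite

/-- Pointwise sum of endogenies. -/
def esum (γ₁ γ₂ : Set (A × A)) : Set (A × A) :=
  {p | ∃ b₁ b₂ : A, (p.1, b₁) ∈ γ₁ ∧ (p.1, b₂) ∈ γ₂ ∧ p.2 = b₁ + b₂}

/-- Pointwise negation of an endogeny. -/
def eneg (γ : Set (A × A)) : Set (A × A) := {p | (p.1, -p.2) ∈ γ}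

/-- Pointwise difference of endogenies. -/
def esub (γ₁ γ₂ : Set (A × A)) : Set (A × A) := esum γ₁ (eneg γ₂)

/-- Composition of endogenies (as relations): `(a, c) ∈ γ₁ ∘ γ₂` iff
`∃ b, b ∈ γ₂[a]` and `c ∈ γ₁[b]`. -/
def ecomp (γ₁ γ₂ : Set (A × A)) : Set (A × A) :=
  {p | ∃ b : A, (p.1, b) ∈ γ₂ ∧ (b, p.2) ∈ γ₁}

/-- Sharp commutation: `im (γ ∘ δ − δ ∘ γ) ⊆ kat γ + kat δ`. -/
def SharpCommute (γ δ : Set (A × A)) : Prop :=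
  eim (esub (ecomp γ δ) (ecomp δ γ)) ⊆ kat γ + kat δ

/-- Equivalence of endogenies: they agree modulo a finite subgroup. -/
def EEquiv (γ₁ γ₂ : Set (A × A)) : Prop :=
  ∃ F : AddSubgroup A, (F : Set A).Finite ∧
    ∀ a : A, fib γ₁ a + (F : Set A) = fib γ₂ a + (F : Set A)

/-- A prering of endogenies: a set of endogenies closed under `+`, `−` and `∘`. -/
def IsPrering (Γ : Set (Set (A × A))) : Prop :=
  (∀ γ ∈ Γ, IsEndogeny γ) ∧ (∀ γ ∈ Γ, ∀ δ ∈ Γ, esum γ δ ∈ Γ) ∧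
  (∀ γ ∈ Γ, eneg γ ∈ Γ) ∧ (∀ γ ∈ Γ, ∀ δ ∈ Γ, ecomp γ δ ∈ Γ)

/-- The katakernel of a prering: the subgroup generated by all the katakernels. -/
def Kat (Γ : Set (Set (A × A))) : AddSubgroup A :=
  AddSubgroup.closure (⋃ γ ∈ Γ, kat γ)

/-- over an algebraically closed field of characteristic `p > 0`,
the inverse relation of the Artin–Schreier endomorphism is an endogeny with
katakernel the prime field, but it does not commute sharply with itself. -/
theorem artin_schreier_inverse_not_sharp (K : Type*) [Field K] [IsAlgClosed K]
    (p : ℕ) [Fact p.Prime] [CharP K p] :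
    IsEndogeny {q : K × K | ∃ x : K, q = (x ^ p - x, x)} ∧
    kat {q : K × K | ∃ x : K, q = (x ^ p - x, x)} = {x : K | x ^ p = x} ∧
    ¬ SharpCommute {q : K × K | ∃ x : K, q = (x ^ p - x, x)}
        {q : K × K | ∃ x : K, q = (x ^ p - x, x)} := by
  have hp : p.Prime := Fact.out
  have hp0 : 0 < p := hp.pos
  set γ : Set (K × K) := {q : K × K | ∃ x : K, q = (x ^ p - x, x)} with hγdef
  -- surjectivity of Artin-Schreier
  have surj : ∀ a : K, ∃ x : K, x ^ p - x = a := by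
    intro a
    have hdeg : (Polynomial.X ^ p - (Polynomial.X + Polynomial.C a) : Polynomial K).degree =
        (p : WithBot ℕ) := by
      rw [Polynomial.degree_sub_eq_left_of_degree_lt, Polynomial.degree_X_pow]
      rw [Polynomial.degree_X_pow]
      calc (Polynomial.X + Polynomial.C a : Polynomial K).degree ≤ 1 := by
            apply Polynomial.degree_add_le_of_degree_le
            · exact le_of_eq Polynomial.degree_X
            · exact (Polynomial.degree_C_le).trans (by norm_num)
        _ < (p : WithBot ℕ) := by exact_mod_cast Nat.one_lt_cast.mpr hp.one_lt
    have hne : (Polynomial.X ^ p - (Polynomial.X + Polynomial.C a) : Polynomial K).degree ≠ 0 := by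
      rw [hdeg]; exact_mod_cast Nat.cast_injective.ne hp0.ne'
    obtain ⟨x, hx⟩ := IsAlgClosed.exists_root _ hne
    refine ⟨x, ?_⟩
    have := hx
    simp only [Polynomial.IsRoot, Polynomial.eval_sub, Polynomial.eval_add,
      Polynomial.eval_pow, Polynomial.eval_X, Polynomial.eval_C] at this
    linear_combination this
  -- γ is an additive subgroup
  have hsub : IsAddSubgroupSet γ := by
    refine ⟨⟨0, by simp [hp0.ne', Prod.ext_iff]⟩, ?_, ?_⟩
    · rintro _ ⟨x, rfl⟩ _ ⟨y, rfl⟩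
      exact ⟨x + y, by rw [Prod.mk_add_mk, add_pow_char x y]; ring_nf⟩
    · rintro _ ⟨x, rfl⟩
      refine ⟨-x, ?_⟩
      have hneg : (-x) ^ p = -(x ^ p) := by
        have := map_neg (frobenius K p) x
        simpa [frobenius_def] using this
      simp [Prod.neg_mk, hneg]; ring
  -- katakernel
  have hkat : kat γ = {x : K | x ^ p = x} := by
    ext b
    constructor
    · rintro ⟨x, hx⟩
      obtain ⟨h1, h2⟩ := Prod.mk.injEq .. ▸ hx
      subst h2
      simpa [sub_eq_zero] using h1.symm
    · intro hb
      refine ⟨b, ?_⟩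
      have hb0 : b ^ p - b = 0 := by rw [hb, sub_self]
      simp [Prod.ext_iff, hb0]
  have hkatfin : (kat γ).Finite := by
    rw [hkat]
    have : {x : K | x ^ p = x} ⊆ {x : K | (Polynomial.X ^ p - Polynomial.X : Polynomial K).IsRoot x} := by
      intro x hx
      simp only [Set.mem_setOf_eq, Polynomial.IsRoot, Polynomial.eval_sub, Polynomial.eval_pow,
        Polynomial.eval_X]
      rw [hx, sub_self]
    refine Set.Finite.subset (Polynomial.finite_setOf_isRoot ?_) this
    intro h
    have := congrArg Polynomial.natDegree h
    rw [Polynomial.natDegree_zero] at this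
    have hdeg : (Polynomial.X ^ p - Polynomial.X : Polynomial K).natDegree = p := by
      rw [Polynomial.natDegree_sub_eq_left_of_natDegree_lt]
      · exact Polynomial.natDegree_X_pow p
      · rw [Polynomial.natDegree_X_pow, Polynomial.natDegree_X]; exact hp.one_lt
    omega
  refine ⟨⟨hsub, fun a => ?_, hkatfin⟩, hkat, ?_⟩
  · obtain ⟨x, hx⟩ := surj a
    exact ⟨x, ⟨x, by rw [hx]⟩⟩
  -- does not commute sharply with itself
  intro hsc
  obtain ⟨d, hd⟩ := surj 1
  have hdmem : d ∈ eim (esub (ecomp γ γ) (ecomp γ γ)) := by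
    refine ⟨0, ⟨d, 0, ?_, ?_, (add_zero d).symm⟩⟩
    · -- (0, d) ∈ ecomp γ γ : ∃ b, (0,b) ∈ γ ∧ (b,d) ∈ γ
      refine ⟨1, ⟨1, ?_⟩, ⟨d, by rw [hd]⟩⟩
      simp
    · -- (0, -0) ∈ ecomp γ γ
      show ((0 : K), -(0 : K)) ∈ ecomp γ γ
      rw [neg_zero]
      exact ⟨0, ⟨0, by simp [hp0.ne']⟩, ⟨0, by simp [hp0.ne']⟩⟩
  have hd2 := hsc hdmem
  rw [hkat] at hd2
  obtain ⟨x, hx, y, hy, hxy⟩ := Set.mem_add.mp hd2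
  have : d ^ p = d := by
    rw [← hxy, add_pow_char x y, hx, hy]
  rw [this] at hd
  simp at hd
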